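/- For every nonnegative integer n, $\frac{E_n(x+iy)+E_n(x-iy)}{2}=\sum_{m=0}^{\lfloor n/2\rfloor}\binom{n}{2m}E_{n-2m}(x)(-1)^m y^{2m}$, where $E_n(z)$ are the type 2 Euler polynomials of a complex variable. -/

import Mathlib

open PowerSeries Finset Complex

/-- The degenerate falling factorial `(x)_{n,λ} = x(x-λ)⋯(x-(n-1)λ)`. -/
noncomputable def dff (l x : ℂ) (n : ℕ) : ℂ := ∏ j ∈ Finset.range n, (x - j * l)

/-- Exponential generating function of a sequence: `Σ f n * t^n / n!`. -/
noncomputable def egf (f : ℕ → ℂ) : PowerSeries ℂ := PowerSeries.mk fun n => f n / n.factorial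

/-- The degenerate exponential `e_λ^x(t) = (1+λt)^{x/λ} = Σ (x)_{n,λ} t^n/n!` as a power series. -/
noncomputable def degExp (l x : ℂ) : PowerSeries ℂ := egf (dff l x)

/-- The degenerate cosine `cos_λ^{(y)}(t) = cos((y/λ) log(1+λt)) = (e_λ^{iy}(t)+e_λ^{-iy}(t))/2`. -/
noncomputable def degCos (l y : ℂ) : PowerSeries ℂ :=
  PowerSeries.C (1/2 : ℂ) * (degExp l (Complex.I * y) + degExp l (-(Complex.I * y)))

/-- The degenerate sine `sin_λ^{(y)}(t) = sin((y/λ) log(1+λt)) = (e_λ^{iy}(t)-e_λ^{-iy}(t))/(2i)`. -/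
noncomputable def degSin (l y : ℂ) : PowerSeries ℂ :=
  PowerSeries.C (1/(2*Complex.I) : ℂ) * (degExp l (Complex.I * y) - degExp l (-(Complex.I * y)))

/-- The exponential series `e^{at} = Σ a^n t^n/n!`. -/
noncomputable def expS (a : ℂ) : PowerSeries ℂ := egf (fun n => a ^ n)

/-- The series of `log(1+t)`. -/
noncomputable def logS : PowerSeries ℂ := PowerSeries.mk fun n => if n = 0 then 0 else (-1)^(n+1) / n

lemma expS_eq (a : ℂ) : expS a = rescale a (PowerSeries.exp ℂ) := by
  ext n
  rw [PowerSeries.coeff_rescale, PowerSeries.coeff_exp]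
  simp [expS, egf]
  ring

lemma expS_mul (a b : ℂ) : expS a * expS b = expS (a + b) := by
  rw [expS_eq, expS_eq, expS_eq, PowerSeries.exp_mul_exp_eq_exp_add]

theorem stmt16 (x y : ℝ) (E : ℂ → ℕ → ℂ)
    (hE : ∀ z : ℂ, egf (E z) * (expS (1/2) + expS (-(1/2))) = 2 * expS z)
    (n : ℕ) :
    (E ((x:ℂ) + Complex.I * y) n + E ((x:ℂ) - Complex.I * y) n) / 2 =
      ∑ m ∈ Finset.range (n/2+1), (n.choose (2*m) : ℂ) * E x (n-2*m) * (-1)^m * (y:ℂ)^(2*m) := by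
  set D : PowerSeries ℂ := expS (1/2) + expS (-(1/2)) with hD
  have hD0 : D ≠ 0 := by
    intro h
    have : PowerSeries.constantCoeff D = 0 := by rw [h]; simp
    rw [hD] at this
    simp [expS, egf, map_add, ← PowerSeries.coeff_zero_eq_constantCoeff] at this
  -- main series identity
  have key : egf (E ((x:ℂ) + Complex.I * y)) + egf (E ((x:ℂ) - Complex.I * y)) =
      egf (E x) * (expS (Complex.I * y) + expS (-(Complex.I * y))) := by
    apply mul_right_cancel₀ hD0
    rw [add_mul, hE, hE]
    calc 2 * expS ((x:ℂ) + Complex.I * y) + 2 * expS ((x:ℂ) - Complex.I * y)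
        = (expS (Complex.I * y) + expS (-(Complex.I * y))) * (2 * expS (x:ℂ)) := by
          have e1 : expS ((x:ℂ) + Complex.I * y) = expS (x:ℂ) * expS (Complex.I * y) :=
            (expS_mul _ _).symm
          have e2 : expS ((x:ℂ) - Complex.I * y) = expS (x:ℂ) * expS (-(Complex.I * y)) := by
            rw [expS_mul, sub_eq_add_neg]
          rw [e1, e2]; ring
      _ = egf (E x) * (expS (Complex.I * y) + expS (-(Complex.I * y))) * D := by
          rw [← hE (x:ℂ)]; ring
  -- take coefficient n
  have hcoeff := congrArg (PowerSeries.coeff n) key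
  rw [map_add, PowerSeries.coeff_mul, Finset.Nat.sum_antidiagonal_eq_sum_range_succ_mk] at hcoeff
  simp only [egf, expS, PowerSeries.coeff_mk, map_add] at hcoeff
  have hfact : ∀ m : ℕ, ((m.factorial : ℂ)) ≠ 0 := fun m => by
    exact_mod_cast Nat.factorial_ne_zero m
  -- multiply through by n!
  have keyn : E ((x:ℂ) + Complex.I * y) n + E ((x:ℂ) - Complex.I * y) n =
      ∑ k ∈ Finset.range (n+1), (n.choose k : ℂ) * E (x:ℂ) k *
        ((Complex.I * y) ^ (n-k) + (-(Complex.I * y)) ^ (n-k)) := by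
    have := congrArg (fun z => (n.factorial : ℂ) * z) hcoeff
    simp only [mul_add, mul_div_assoc] at this
    rw [mul_div_cancel₀ _ (hfact n), mul_div_cancel₀ _ (hfact n), Finset.mul_sum] at this
    rw [this]
    apply Finset.sum_congr rfl
    intro k hk
    rw [Finset.mem_range, Nat.lt_succ_iff] at hk
    rw [Nat.cast_choose ℂ hk]
    field_simp
  -- reflect the sum
  have hrefl : ∑ k ∈ Finset.range (n+1), (n.choose k : ℂ) * E (x:ℂ) k *
        ((Complex.I * y) ^ (n-k) + (-(Complex.I * y)) ^ (n-k)) =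
      ∑ k ∈ Finset.range (n+1), (n.choose k : ℂ) * E (x:ℂ) (n-k) *
        ((Complex.I * y) ^ k + (-(Complex.I * y)) ^ k) := by
    rw [← Finset.sum_range_reflect]
    apply Finset.sum_congr rfl
    intro k hk
    rw [Finset.mem_range, Nat.lt_succ_iff] at hk
    have h1 : n + 1 - 1 - k = n - k := by omega
    have h2 : n - (n - k) = k := by omega
    rw [h1, h2, Nat.choose_symm hk]
  rw [keyn, hrefl]
  have hvan : ∀ k ∈ Finset.range (n+1),
      (n.choose k : ℂ) * E (x:ℂ) (n-k) *
        ((Complex.I * y) ^ k + (-(Complex.I * y)) ^ k) ≠ 0 → Even k := by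
    intro k _ hne
    by_contra hodd
    rw [Nat.not_even_iff_odd] at hodd
    apply hne
    rw [hodd.neg_pow]
    ring
  have himg : (Finset.range (n+1)).filter (fun k => Even k) =
      (Finset.range (n/2+1)).image (fun m => 2*m) := by
    ext k
    simp only [Finset.mem_filter, Finset.mem_range, Finset.mem_image, Nat.lt_succ_iff]
    constructor
    · rintro ⟨hk, r, rfl⟩
      exact ⟨r, by omega, by omega⟩
    · rintro ⟨m, hm, rfl⟩
      exact ⟨by omega, ⟨m, by omega⟩⟩
  rw [← Finset.sum_filter_of_ne hvan, himg,
    Finset.sum_image (by intro a _ b _ h; beta_reduce at h; omega)]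
  rw [Finset.sum_div]
  apply Finset.sum_congr rfl
  intro m _
  rw [(even_two_mul m).neg_pow]
  have h2 : (Complex.I * (y:ℂ)) ^ (2*m) = (-1:ℂ)^m * (y:ℂ)^(2*m) := by
    rw [pow_mul, pow_mul, mul_pow, Complex.I_sq]
    ring
  rw [h2]
  ring
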